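/- No one-way deterministic one-counter automaton (1D1CA) over the alphabet {0,#} solves the promise problem XOR-EQ, i.e., for every 1D1CA M it is not the case that M accepts every yes-instance of XOR-EQ and rejects every no-instance of XOR-EQ. -/
import Mathlib


/-- Input symbols extended with the left (`cent`) and right (`dollar`) end-markers. -/
inductive TSym (α : Type) : Type
  | cent : TSym α
  | letter : α → TSym α
  | dollar : TSym α

/-- The tape content `¢ w $` for an input word `w`. -/
def tagged {α : Type} (w : List α) : List (TSym α) :=
  TSym.cent :: (w.map TSym.letter ++ [TSym.dollar])

/-- A one-way deterministic one-counter automaton. -/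
structure OneD1CA (α : Type) where
  Q : Type
  [fintypeQ : Fintype Q]
  [decQ : DecidableEq Q]
  q0 : Q
  acc : Set Q
  m : ℕ
  δ : Q → TSym α → Bool → Q × ℤ
  bound : ∀ q σ z, |(δ q σ z).2| ≤ (m : ℤ)

attribute [instance] OneD1CA.fintypeQ OneD1CA.decQ

namespace OneD1CA

variable {α : Type} (M : OneD1CA α)

/-- One computation step on a configuration (state, counter value). -/
def step (p : M.Q × ℤ) (σ : TSym α) : M.Q × ℤ :=
  ((M.δ p.1 σ (decide (p.2 = 0))).1, p.2 + (M.δ p.1 σ (decide (p.2 = 0))).2)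

/-- Configuration reached from the initial configuration after reading a list of tape symbols. -/
def confAfter (l : List (TSym α)) : M.Q × ℤ :=
  l.foldl M.step (M.q0, 0)

/-- The automaton accepts `w` iff the state after reading `¢ w $` is accepting. -/
def accepts (w : List α) : Prop :=
  (M.confAfter (tagged w)).1 ∈ M.acc

/-- The automaton recognizes the language `L` if it accepts exactly the members of `L`. -/
def recognizes (L : Set (List α)) : Prop :=
  ∀ w : List α, M.accepts w ↔ w ∈ L

end OneD1CA

/-- The alphabet `{0, #}` (`z` is the symbol `0`, `h` is the symbol `#`). -/
inductive XSym : Type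
  | z : XSym
  | h : XSym
deriving DecidableEq

/-- The block `0^n`. -/
def zeros (n : ℕ) : List XSym := List.replicate n XSym.z

/-- The string `0^a # 0^b # 0^c # 0^d # 0^{k1} # 0^{k2} # 0^{l1} # 0^{l2}`. -/
def xweWord (a b c d k1 k2 l1 l2 : ℕ) : List XSym :=
  zeros a ++ [XSym.h] ++ zeros b ++ [XSym.h] ++ zeros c ++ [XSym.h] ++ zeros d ++ [XSym.h] ++
    zeros k1 ++ [XSym.h] ++ zeros k2 ++ [XSym.h] ++ zeros l1 ++ [XSym.h] ++ zeros l2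

/-- `(-1) ^ [u = v]`. -/
def xweSign (u v : ℕ) : ℤ := if u = v then -1 else 1

/-- The promise of the problem `XOR-EQ`. -/
def xwePromise (a b c d k1 k2 l1 l2 : ℕ) : Prop :=
  0 < a ∧ Even a ∧ 0 < b ∧ Even b ∧ 0 < c ∧ Even c ∧ 0 < d ∧ Even d ∧
    (a : ℤ) - (c : ℤ) + xweSign a c * ((k1 : ℤ) - (k2 : ℤ)) =
      (b : ℤ) - (d : ℤ) + xweSign b d * ((l1 : ℤ) - (l2 : ℤ))

/-- Yes-instances of `XOR-EQ`: promised strings where exactly one of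
`a = c`, `b = d` holds. -/
def XorEqYes : Set (List XSym) :=
  {w | ∃ a b c d k1 k2 l1 l2 : ℕ, xwePromise a b c d k1 k2 l1 l2 ∧
    Xor' (a = c) (b = d) ∧ w = xweWord a b c d k1 k2 l1 l2}

/-- No-instances of `XOR-EQ`: the remaining promised strings. -/
def XorEqNo : Set (List XSym) :=
  {w | ∃ a b c d k1 k2 l1 l2 : ℕ, xwePromise a b c d k1 k2 l1 l2 ∧
    ¬ Xor' (a = c) (b = d) ∧ w = xweWord a b c d k1 k2 l1 l2}

/-- The prefix `0^{2i} # 0^{2j} #`. -/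
def xwePref (i j : ℕ) : List XSym :=
  zeros (2 * i) ++ [XSym.h] ++ zeros (2 * j) ++ [XSym.h]

lemma foldl_counter_bound {α : Type} (M : OneD1CA α) (l : List (TSym α)) (p : M.Q × ℤ) :
    |(l.foldl M.step p).2| ≤ |p.2| + (M.m : ℤ) * l.length := by
  induction l generalizing p with
  | nil => simp
  | cons σ t ih =>
    simp only [List.foldl_cons, List.length_cons]
    have h1 := ih (M.step p σ)
    have hb := M.bound p.1 σ (decide (p.2 = 0))
    have h2 : |(M.step p σ).2| ≤ |p.2| + (M.m : ℤ) := by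
      simp only [OneD1CA.step]
      calc |p.2 + (M.δ p.1 σ (decide (p.2 = 0))).2|
          ≤ |p.2| + |(M.δ p.1 σ (decide (p.2 = 0))).2| := abs_add_le _ _
        _ ≤ |p.2| + (M.m : ℤ) := by linarith
    push_cast
    push_cast at h1
    linarith

lemma accepts_ext (M : OneD1CA XSym) {u1 u2 : List XSym}
    (h : List.foldl M.step (M.q0, 0) (TSym.cent :: u1.map TSym.letter)
       = List.foldl M.step (M.q0, 0) (TSym.cent :: u2.map TSym.letter))
    (s : List XSym) : M.accepts (u1 ++ s) ↔ M.accepts (u2 ++ s) := by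
  unfold OneD1CA.accepts OneD1CA.confAfter tagged
  have e1 : TSym.cent :: ((u1 ++ s).map TSym.letter ++ [TSym.dollar])
      = (TSym.cent :: u1.map TSym.letter) ++ (s.map TSym.letter ++ [TSym.dollar]) := by
    simp
  have e2 : TSym.cent :: ((u2 ++ s).map TSym.letter ++ [TSym.dollar])
      = (TSym.cent :: u2.map TSym.letter) ++ (s.map TSym.letter ++ [TSym.dollar]) := by
    simp
  rw [e1, e2]
  simp only [List.foldl_append]
  rw [h]

/-- Given two distinct prefix index pairs, there is a common suffix making the first
word a yes-instance and the second a no-instance. -/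
lemma exists_suffix (i j i' j' : ℕ) (hi : 1 ≤ i) (hj : 1 ≤ j) (hi' : 1 ≤ i') (hj' : 1 ≤ j')
    (hne : (i, j) ≠ (i', j')) :
    ∃ s : List XSym, (xwePref i j ++ s) ∈ XorEqYes ∧ (xwePref i' j' ++ s) ∈ XorEqNo := by
  by_cases hii : i = i'
  · -- then j ≠ j'
    subst hii
    have hjj : j ≠ j' := by
      intro hh; exact hne (by rw [hh])
    -- c = 2i+2, d = 2j, K = j' - j + 2, L = j - j'
    refine ⟨zeros (2 * i + 2) ++ [XSym.h] ++ zeros (2 * j) ++ [XSym.h] ++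
      zeros ((j' : ℤ) - j + 2).toNat ++ [XSym.h] ++ zeros (-((j' : ℤ) - j + 2)).toNat ++ [XSym.h] ++
      zeros ((j : ℤ) - j').toNat ++ [XSym.h] ++ zeros (-((j : ℤ) - j')).toNat, ?_, ?_⟩
    · refine ⟨2 * i, 2 * j, 2 * i + 2, 2 * j, ((j' : ℤ) - j + 2).toNat,
        (-((j' : ℤ) - j + 2)).toNat, ((j : ℤ) - j').toNat, (-((j : ℤ) - j')).toNat, ?_, ?_, ?_⟩
      · refine ⟨by omega, ⟨i, by ring⟩, by omega, ⟨j, by ring⟩, by omega, ⟨i + 1, by ring⟩,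
          by omega, ⟨j, by ring⟩, ?_⟩
        rw [xweSign, xweSign, if_neg (by omega : ¬ (2 * i = 2 * i + 2)), if_pos rfl]
        push_cast
        omega
      · exact Or.inr ⟨rfl, by omega⟩
      · simp [xwePref, xweWord, List.append_assoc]
    · refine ⟨2 * i, 2 * j', 2 * i + 2, 2 * j, ((j' : ℤ) - j + 2).toNat,
        (-((j' : ℤ) - j + 2)).toNat, ((j : ℤ) - j').toNat, (-((j : ℤ) - j')).toNat, ?_, ?_, ?_⟩
      · refine ⟨by omega, ⟨i, by ring⟩, by omega, ⟨j', by ring⟩, by omega, ⟨i + 1, by ring⟩,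
          by omega, ⟨j, by ring⟩, ?_⟩
        rw [xweSign, xweSign, if_neg (by omega : ¬ (2 * i = 2 * i + 2)),
          if_neg (by omega : ¬ (2 * j' = 2 * j))]
        push_cast
        omega
      · rintro (⟨h1, h2⟩ | ⟨h1, h2⟩) <;> omega
      · simp [xwePref, xweWord, List.append_assoc]
  · -- i ≠ i' : c = 2i, d = 2j + 2j' + 2, K = j' - j - i' + i, L = 2j' + 2 - K
    refine ⟨zeros (2 * i) ++ [XSym.h] ++ zeros (2 * j + 2 * j' + 2) ++ [XSym.h] ++
      zeros ((j' : ℤ) - j - i' + i).toNat ++ [XSym.h] ++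
      zeros (-((j' : ℤ) - j - i' + i)).toNat ++ [XSym.h] ++
      zeros (2 * (j' : ℤ) + 2 - ((j' : ℤ) - j - i' + i)).toNat ++ [XSym.h] ++
      zeros (-(2 * (j' : ℤ) + 2 - ((j' : ℤ) - j - i' + i))).toNat, ?_, ?_⟩
    · refine ⟨2 * i, 2 * j, 2 * i, 2 * j + 2 * j' + 2, ((j' : ℤ) - j - i' + i).toNat,
        (-((j' : ℤ) - j - i' + i)).toNat,
        (2 * (j' : ℤ) + 2 - ((j' : ℤ) - j - i' + i)).toNat,
        (-(2 * (j' : ℤ) + 2 - ((j' : ℤ) - j - i' + i))).toNat, ?_, ?_, ?_⟩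
      · refine ⟨by omega, ⟨i, by ring⟩, by omega, ⟨j, by ring⟩, by omega, ⟨i, by ring⟩,
          by omega, ⟨j + j' + 1, by ring⟩, ?_⟩
        rw [xweSign, xweSign, if_pos rfl, if_neg (by omega : ¬ (2 * j = 2 * j + 2 * j' + 2))]
        push_cast
        omega
      · exact Or.inl ⟨rfl, by omega⟩
      · simp [xwePref, xweWord, List.append_assoc]
    · refine ⟨2 * i', 2 * j', 2 * i, 2 * j + 2 * j' + 2, ((j' : ℤ) - j - i' + i).toNat,
        (-((j' : ℤ) - j - i' + i)).toNat,
        (2 * (j' : ℤ) + 2 - ((j' : ℤ) - j - i' + i)).toNat,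
        (-(2 * (j' : ℤ) + 2 - ((j' : ℤ) - j - i' + i))).toNat, ?_, ?_, ?_⟩
      · refine ⟨by omega, ⟨i', by ring⟩, by omega, ⟨j', by ring⟩, by omega, ⟨i, by ring⟩,
          by omega, ⟨j + j' + 1, by ring⟩, ?_⟩
        rw [xweSign, xweSign, if_neg (by omega : ¬ (2 * i' = 2 * i)),
          if_neg (by omega : ¬ (2 * j' = 2 * j + 2 * j' + 2))]
        push_cast
        omega
      · rintro (⟨h1, h2⟩ | ⟨h1, h2⟩) <;> omega
      · simp [xwePref, xweWord, List.append_assoc]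

/-- no 1D1CA solves `XOR-EQ`. -/
theorem stmt1 (M : OneD1CA XSym) :
    ¬ ((∀ w ∈ XorEqYes, M.accepts w) ∧ (∀ w ∈ XorEqNo, ¬ M.accepts w)) := by
  rintro ⟨hyes, hno⟩
  classical
  obtain ⟨Qc, hQc⟩ : ∃ Qc : ℕ, Qc = Fintype.card M.Q := ⟨_, rfl⟩
  obtain ⟨m, hm⟩ : ∃ m : ℕ, m = M.m := ⟨_, rfl⟩
  obtain ⟨n, hn⟩ : ∃ n : ℕ, n = Qc * (14 * m + 1) + 1 := ⟨_, rfl⟩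
  have hn1 : 1 ≤ n := by omega
  obtain ⟨B, hB⟩ : ∃ B : ℤ, B = (m : ℤ) * (4 * (n : ℤ) + 3) := ⟨_, rfl⟩
  have hB0 : 0 ≤ B := by rw [hB]; positivity
  obtain ⟨f, hf⟩ : ∃ f : ℕ × ℕ → M.Q × ℤ, f =
      fun p => List.foldl M.step (M.q0, 0) (TSym.cent :: (xwePref p.1 p.2).map TSym.letter) :=
    ⟨_, rfl⟩
  obtain ⟨D, hD⟩ : ∃ D : Finset (ℕ × ℕ), D = Finset.Icc 1 n ×ˢ Finset.Icc 1 n := ⟨_, rfl⟩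
  obtain ⟨T, hT⟩ : ∃ T : Finset (M.Q × ℤ), T = Finset.univ ×ˢ Finset.Icc (-B) B := ⟨_, rfl⟩
  have hmaps : ∀ p ∈ D, f p ∈ T := by
    rintro ⟨i, j⟩ hp
    simp only [hD, Finset.mem_product, Finset.mem_Icc] at hp
    have hbd := foldl_counter_bound M (TSym.cent :: (xwePref i j).map TSym.letter) (M.q0, 0)
    have hlen : (TSym.cent :: (xwePref i j).map TSym.letter).length = 2 * i + 2 * j + 3 := by
      simp [xwePref, zeros]
      omega
    rw [hlen] at hbd
    simp only [hT, hf, Finset.mem_product, Finset.mem_univ, true_and, Finset.mem_Icc]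
    have hkey : |(List.foldl M.step (M.q0, 0) (TSym.cent :: (xwePref i j).map TSym.letter)).2|
        ≤ B := by
      have h1 : ((2 * i + 2 * j + 3 : ℕ) : ℤ) ≤ (4 * (n : ℤ) + 3) := by
        have : 2 * i + 2 * j + 3 ≤ 4 * n + 3 := by omega
        exact_mod_cast this
      have h2 : (M.m : ℤ) * ((2 * i + 2 * j + 3 : ℕ) : ℤ) ≤ B := by
        rw [hB, ← hm]
        exact mul_le_mul_of_nonneg_left h1 (by positivity)
      simp only [abs_zero] at hbd
      linarith
    exact abs_le.mp hkey
  have hBt : (2 * B + 1).toNat = 8 * m * n + 6 * m + 1 := by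
    have h1 : (2 * B + 1 : ℤ) = ((8 * m * n + 6 * m + 1 : ℕ) : ℤ) := by
      rw [hB]; push_cast; ring
    rw [h1, Int.toNat_natCast]
  have hcardT : T.card = Qc * (8 * m * n + 6 * m + 1) := by
    rw [hT, Finset.card_product, Finset.card_univ, Int.card_Icc, ← hQc]
    congr 1
    rw [← hBt]
    congr 1
    omega
  have hcardD : D.card = n * n := by
    rw [hD, Finset.card_product, Nat.card_Icc, Nat.add_sub_cancel]
  have hcard : T.card < D.card := by
    rw [hcardT, hcardD]
    have h6 : 8 * m * n + 6 * m + 1 ≤ (14 * m + 1) * n := by nlinarith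
    calc Qc * (8 * m * n + 6 * m + 1) ≤ Qc * ((14 * m + 1) * n) :=
          Nat.mul_le_mul_left _ h6
      _ = (Qc * (14 * m + 1)) * n := by ring
      _ < n * n := Nat.mul_lt_mul_of_lt_of_le (by omega) le_rfl (by omega)
  obtain ⟨p, hp, p', hp', hpne, hfeq⟩ :=
    Finset.exists_ne_map_eq_of_card_lt_of_maps_to hcard hmaps
  obtain ⟨i, j⟩ := p
  obtain ⟨i', j'⟩ := p'
  simp only [hD, Finset.mem_product, Finset.mem_Icc] at hp hp'
  obtain ⟨s, hw1, hw2⟩ := exists_suffix i j i' j' hp.1.1 hp.2.1 hp'.1.1 hp'.2.1 hpne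
  rw [hf] at hfeq
  have hacc := accepts_ext M hfeq s
  exact hno _ hw2 (hacc.mp (hyes _ hw1))
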